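/- D_f coincides with the Finsler quasidistance on the interior: suppose f is continuously differentiable on (0,1) with f' positive. Then for all P, Q ∈ Δ°_N, D_f(P,Q) equals the infimum of ∫_a^b max_i f'(γ_i(τ))·γ_i'(τ) dτ over all piecewise C¹ curves γ : [a,b] → Δ°_N with γ(a) = P and γ(b) = Q. -/

import Mathlib

open Set


/-- Membership in the interior Δ°_N of the probability simplex. -/
def memInteriorSimplex {N : ℕ} (P : Fin (N + 1) → ℝ) : Prop :=
  (∀ i, P i ∈ Set.Ioo (0 : ℝ) 1) ∧ ∑ i, P i = 1

/-- The max-type quasimetric D_f(P,Q) = max_i (f(q_i) - f(p_i)). -/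
noncomputable def Df {N : ℕ} (f : ℝ → ℝ) (P Q : Fin (N + 1) → ℝ) : ℝ :=
  ⨆ i, (f (Q i) - f (P i))

/-- The set of Finsler lengths ∫_a^b max_i f'(γ_i(τ))·γ_i'(τ) dτ of piecewise C¹
curves γ : [a,b] → Δ°_N from P to Q; a piecewise C¹ curve is one which is C¹ on
each cell [t_j, t_{j+1}] of some partition a = t₀ < t₁ < … < tₙ = b. -/
def finslerLengths {N : ℕ} (f : ℝ → ℝ) (P Q : Fin (N + 1) → ℝ) : Set ℝ :=
  { L : ℝ | ∃ (a b : ℝ), a < b ∧ ∃ γ : ℝ → Fin (N + 1) → ℝ,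
      γ a = P ∧ γ b = Q ∧ (∀ τ ∈ Set.Icc a b, memInteriorSimplex (γ τ)) ∧
      ∃ (n : ℕ) (t : Fin (n + 1) → ℝ), StrictMono t ∧ t 0 = a ∧ t (Fin.last n) = b ∧
        (∀ j : Fin n, ContDiffOn ℝ 1 γ (Set.Icc (t j.castSucc) (t j.succ))) ∧
        L = ∑ j : Fin n, ∫ τ in (t j.castSucc)..(t j.succ),
              ⨆ i, deriv f (γ τ i) *
                derivWithin (fun s => γ s i) (Set.Icc (t j.castSucc) (t j.succ)) τ }

lemma aux_contOn_isup {N : ℕ} {h : Fin (N+1) → ℝ → ℝ} {s : Set ℝ}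
    (hc : ∀ i, ContinuousOn (h i) s) :
    ContinuousOn (fun τ => ⨆ i, h i τ) s := by
  have he : (fun τ => ⨆ i, h i τ)
      = fun τ => Finset.univ.sup' Finset.univ_nonempty (fun i => h i τ) := by
    funext τ; rw [Finset.sup'_univ_eq_ciSup]
  rw [he]
  exact ContinuousOn.finset_sup'_apply Finset.univ_nonempty (fun i _ => hc i)

lemma aux_telescope (F : ℝ → ℝ) : ∀ (n : ℕ) (t : Fin (n+1) → ℝ),
    ∑ j : Fin n, (F (t j.succ) - F (t j.castSucc)) = F (t (Fin.last n)) - F (t 0) := by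
  intro n
  induction n with
  | zero => intro t; simp
  | succ n ih =>
    intro t
    rw [Fin.sum_univ_castSucc]
    have h := ih (t ∘ Fin.castSucc)
    simp only [Function.comp] at h
    simp only [Fin.succ_castSucc] at *
    rw [h, Fin.succ_last, Fin.castSucc_zero]
    ring

lemma aux_piece {N : ℕ} {f : ℝ → ℝ}
    (hfc : ContinuousOn f (Set.Icc 0 1))
    (hfsmooth : ContDiffOn ℝ 1 f (Set.Ioo 0 1))
    {γ : ℝ → Fin (N + 1) → ℝ} {c d : ℝ} (hcd : c < d)
    (hmem : ∀ τ ∈ Set.Icc c d, ∀ i, γ τ i ∈ Set.Ioo (0:ℝ) 1)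
    (hγ : ContDiffOn ℝ 1 γ (Set.Icc c d)) (i : Fin (N + 1)) :
    f (γ d i) - f (γ c i) ≤ ∫ τ in c..d,
      ⨆ k, deriv f (γ τ k) * derivWithin (fun s => γ s k) (Set.Icc c d) τ := by
  have hγi : ∀ k, ContDiffOn ℝ 1 (fun s => γ s k) (Set.Icc c d) := contDiffOn_pi.mp hγ
  have hud : UniqueDiffOn ℝ (Set.Icc c d) := uniqueDiffOn_Icc hcd
  have hf' : ContinuousOn (deriv f) (Set.Ioo 0 1) :=
    hfsmooth.continuousOn_deriv_of_isOpen isOpen_Ioo le_rfl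
  have hterm : ∀ k, ContinuousOn
      (fun τ => deriv f (γ τ k) * derivWithin (fun s => γ s k) (Set.Icc c d) τ)
      (Set.Icc c d) := by
    intro k
    exact (hf'.comp (hγi k).continuousOn (fun τ hτ => hmem τ hτ k)).mul
      ((hγi k).continuousOn_derivWithin hud le_rfl)
  have hsup : ContinuousOn
      (fun τ => ⨆ k, deriv f (γ τ k) * derivWithin (fun s => γ s k) (Set.Icc c d) τ)
      (Set.Icc c d) := by
    have he : (fun τ => ⨆ k : Fin (N+1), deriv f (γ τ k) * derivWithin (fun s => γ s k) (Set.Icc c d) τ)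
        = fun τ => Finset.univ.sup' Finset.univ_nonempty
            (fun k => deriv f (γ τ k) * derivWithin (fun s => γ s k) (Set.Icc c d) τ) := by
      funext τ; rw [Finset.sup'_univ_eq_ciSup]
    rw [he]
    exact ContinuousOn.finset_sup'_apply Finset.univ_nonempty (fun k _ => hterm k)
  have hint_sup : IntervalIntegrable
      (fun τ => ⨆ k, deriv f (γ τ k) * derivWithin (fun s => γ s k) (Set.Icc c d) τ)
      MeasureTheory.volume c d := by
    apply ContinuousOn.intervalIntegrable; rwa [Set.uIcc_of_le hcd.le]
  have hint_i : IntervalIntegrable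
      (fun τ => deriv f (γ τ i) * derivWithin (fun s => γ s i) (Set.Icc c d) τ)
      MeasureTheory.volume c d := by
    apply ContinuousOn.intervalIntegrable; rw [Set.uIcc_of_le hcd.le]; exact hterm i
  have hftc : (∫ τ in c..d,
      deriv f (γ τ i) * derivWithin (fun s => γ s i) (Set.Icc c d) τ)
      = f (γ d i) - f (γ c i) := by
    apply intervalIntegral.integral_eq_sub_of_hasDeriv_right_of_le hcd.le
    · exact hfc.comp (hγi i).continuousOn
        (fun τ hτ => Set.Ioo_subset_Icc_self (hmem τ hτ i))
    · intro x hx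
      have h1 : HasDerivAt (fun s => γ s i)
          (derivWithin (fun s => γ s i) (Set.Icc c d) x) x := by
        have := (((hγi i).differentiableOn one_ne_zero) x (Set.Ioo_subset_Icc_self hx)).hasDerivWithinAt
        exact this.hasDerivAt (Icc_mem_nhds hx.1 hx.2)
      have h2 : HasDerivAt f (deriv f (γ x i)) (γ x i) := by
        have hd := (hfsmooth.differentiableOn one_ne_zero).differentiableAt
          (isOpen_Ioo.mem_nhds (hmem x (Set.Ioo_subset_Icc_self hx) i))
        exact hd.hasDerivAt
      exact (h2.comp x h1).hasDerivWithinAt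
    · exact hint_i
  rw [← hftc]
  exact intervalIntegral.integral_mono_on hcd.le hint_i hint_sup
    (fun τ hτ => le_ciSup (f := fun k => deriv f (γ τ k) *
      derivWithin (fun s => γ s k) (Set.Icc c d) τ)
      (Set.Finite.bddAbove (Set.finite_range _)) i)

lemma aux_lb {N : ℕ} {f : ℝ → ℝ}
    (hfc : ContinuousOn f (Set.Icc 0 1))
    (hfsmooth : ContDiffOn ℝ 1 f (Set.Ioo 0 1))
    (P Q : Fin (N + 1) → ℝ) :
    ∀ L ∈ finslerLengths f P Q, Df f P Q ≤ L := by
  rintro L ⟨a, b, hab, γ, hγa, hγb, hmem, n, t, ht, ht0, htl, hsm, hL⟩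
  apply ciSup_le
  intro i
  have key : ∀ j : Fin n,
      f (γ (t j.succ) i) - f (γ (t j.castSucc) i) ≤
        ∫ τ in (t j.castSucc)..(t j.succ),
          ⨆ k, deriv f (γ τ k) *
            derivWithin (fun s => γ s k) (Set.Icc (t j.castSucc) (t j.succ)) τ := by
    intro j
    have hsub : Set.Icc (t j.castSucc) (t j.succ) ⊆ Set.Icc a b := by
      apply Set.Icc_subset_Icc
      · rw [← ht0]; exact ht.monotone (Fin.zero_le _)
      · rw [← htl]; exact ht.monotone (Fin.le_last _)
    exact aux_piece hfc hfsmooth (ht (Fin.castSucc_lt_succ : j.castSucc < j.succ))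
      (fun τ hτ k => (hmem τ (hsub hτ)).1 k) (hsm j) i
  have htel := aux_telescope (fun τ => f (γ τ i)) n t
  calc f (Q i) - f (P i)
      = ∑ j : Fin n, (f (γ (t j.succ) i) - f (γ (t j.castSucc) i)) := by
        rw [htel, ht0, htl, hγa, hγb]
    _ ≤ L := by rw [hL]; exact Finset.sum_le_sum (fun j _ => key j)

lemma aux_inv {f : ℝ → ℝ}
    (hfc : ContinuousOn f (Set.Icc 0 1))
    (hfm : StrictMonoOn f (Set.Icc 0 1))
    (hf0 : f 0 = 0) (hf1 : f 1 = 1)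
    (hfsmooth : ContDiffOn ℝ 1 f (Set.Ioo 0 1))
    (hf'pos : ∀ x ∈ Set.Ioo (0 : ℝ) 1, 0 < deriv f x) :
    ∃ g : ℝ → ℝ, (∀ x ∈ Set.Icc (0:ℝ) 1, g (f x) = x) ∧
      (∀ u ∈ Set.Ioo (0:ℝ) 1, g u ∈ Set.Ioo (0:ℝ) 1 ∧ f (g u) = u) ∧
      (∀ u ∈ Set.Ioo (0:ℝ) 1, HasDerivAt g (deriv f (g u))⁻¹ u) ∧
      ContDiffOn ℝ 1 g (Set.Ioo 0 1) := by
  have hmono : MonotoneOn f (Set.Icc 0 1) := hfm.monotoneOn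
  have himg1 : Set.Icc (0:ℝ) 1 ⊆ f '' Set.Icc 0 1 := by
    have := intermediate_value_Icc (zero_le_one (α := ℝ)) hfc
    rwa [hf0, hf1] at this
  set g := Function.invFunOn f (Set.Icc 0 1) with hgdef
  have hgf : ∀ x ∈ Set.Icc (0:ℝ) 1, g (f x) = x := fun x hx =>
    hfm.injOn.leftInvOn_invFunOn hx
  have hsurj : ∀ u ∈ Set.Ioo (0:ℝ) 1, ∃ x ∈ Set.Ioo (0:ℝ) 1, f x = u := by
    intro u hu
    obtain ⟨x, hx, hfx⟩ := himg1 (Set.Ioo_subset_Icc_self hu)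
    refine ⟨x, ⟨?_, ?_⟩, hfx⟩
    · rcases lt_or_eq_of_le hx.1 with h | h
      · exact h
      · exfalso; subst h; rw [hf0] at hfx; exact hu.1.ne' hfx.symm
    · rcases lt_or_eq_of_le hx.2 with h | h
      · exact h
      · exfalso; subst h; rw [hf1] at hfx; exact hu.2.ne hfx.symm
  have hgmem : ∀ u ∈ Set.Ioo (0:ℝ) 1, g u ∈ Set.Ioo (0:ℝ) 1 ∧ f (g u) = u := by
    intro u hu
    obtain ⟨x, hx, hfx⟩ := hsurj u hu
    have : g u = x := by rw [← hfx]; exact hgf x (Set.Ioo_subset_Icc_self hx)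
    rw [this, hfx]; exact ⟨hx, rfl⟩
  have himgg : g '' Set.Icc 0 1 = Set.Icc 0 1 := by
    have h2 : f '' Set.Icc 0 1 ⊆ Set.Icc 0 1 := by
      rintro _ ⟨x, hx, rfl⟩
      exact ⟨by rw [← hf0]; exact hmono ⟨le_rfl, zero_le_one⟩ hx hx.1,
             by rw [← hf1]; exact hmono hx ⟨zero_le_one, le_rfl⟩ hx.2⟩
    have himg : f '' Set.Icc 0 1 = Set.Icc 0 1 := subset_antisymm h2 himg1
    calc g '' Set.Icc 0 1 = g '' (f '' Set.Icc 0 1) := by rw [himg]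
      _ = Set.Icc 0 1 := by
          rw [Set.image_image, Set.image_congr hgf]; exact Set.image_id _
  have hgmono : MonotoneOn g (Set.Icc 0 1) := by
    intro u1 h1 u2 h2 hle
    obtain ⟨x1, hx1, hfx1⟩ := himg1 h1
    obtain ⟨x2, hx2, hfx2⟩ := himg1 h2
    rw [← hfx1, ← hfx2, hgf x1 hx1, hgf x2 hx2]
    by_contra hcon
    push_neg at hcon
    have := hfm hx2 hx1 hcon
    rw [hfx1, hfx2] at this
    exact absurd hle (not_le.mpr this)
  have hgcont : ∀ u ∈ Set.Ioo (0:ℝ) 1, ContinuousAt g u := by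
    intro u hu
    apply continuousAt_of_monotoneOn_of_image_mem_nhds hgmono
      (Icc_mem_nhds hu.1 hu.2)
    rw [himgg]
    exact Icc_mem_nhds (hgmem u hu).1.1 (hgmem u hu).1.2
  have hgderiv : ∀ u ∈ Set.Ioo (0:ℝ) 1, HasDerivAt g (deriv f (g u))⁻¹ u := by
    intro u hu
    have hgu := (hgmem u hu).1
    have hfd : HasDerivAt f (deriv f (g u)) (g u) :=
      ((hfsmooth.differentiableOn one_ne_zero).differentiableAt
        (isOpen_Ioo.mem_nhds hgu)).hasDerivAt
    exact HasDerivAt.of_local_left_inverse (hgcont u hu) hfd (hf'pos _ hgu).ne'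
      (Filter.eventually_of_mem (isOpen_Ioo.mem_nhds hu) (fun y hy => (hgmem y hy).2))
  refine ⟨g, hgf, hgmem, hgderiv, ?_⟩
  rw [show (1 : WithTop ℕ∞) = 0 + 1 from rfl,
    contDiffOn_succ_iff_deriv_of_isOpen isOpen_Ioo]
  have hgdiff : DifferentiableOn ℝ g (Set.Ioo 0 1) := fun u hu =>
    ((hgderiv u hu).differentiableAt).differentiableWithinAt
  refine ⟨hgdiff, by simp, ?_⟩
  rw [contDiffOn_zero]
  have hf'c : ContinuousOn (deriv f) (Set.Ioo 0 1) :=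
    hfsmooth.continuousOn_deriv_of_isOpen isOpen_Ioo le_rfl
  have hgcOn : ContinuousOn g (Set.Ioo 0 1) := fun u hu => (hgcont u hu).continuousWithinAt
  have : ContinuousOn (fun u => (deriv f (g u))⁻¹) (Set.Ioo 0 1) :=
    (hf'c.comp hgcOn (fun u hu => (hgmem u hu).1)).inv₀
      (fun u hu => (hf'pos _ (hgmem u hu).1).ne')
  exact this.congr (fun u hu => (hgderiv u hu).deriv)

lemma aux_onepiece {N : ℕ} {f : ℝ → ℝ} {P Q : Fin (N + 1) → ℝ}
    {γ : ℝ → Fin (N + 1) → ℝ} {M : ℝ}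
    (h0 : γ 0 = P) (h1 : γ 1 = Q)
    (hmem : ∀ τ ∈ Set.Icc (0:ℝ) 1, memInteriorSimplex (γ τ))
    (hcd : ContDiffOn ℝ 1 γ (Set.Icc 0 1))
    (hsup : ∀ τ ∈ Set.Icc (0:ℝ) 1,
      (⨆ i, deriv f (γ τ i) * derivWithin (fun s => γ s i) (Set.Icc 0 1) τ) = M) :
    M ∈ finslerLengths f P Q := by
  refine ⟨0, 1, one_pos, γ, h0, h1, hmem, 1, fun j => ((j : ℕ) : ℝ), ?_, by norm_num,
    by norm_num [Fin.last], ?_, ?_⟩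
  · intro j k hjk
    have : (j : ℕ) < (k : ℕ) := hjk
    simpa using (Nat.cast_lt (α := ℝ)).mpr this
  · intro j
    have hj0 : j = 0 := Subsingleton.elim j 0
    subst hj0
    simpa using hcd
  · rw [Fin.sum_univ_one]
    have e1 : ((((0 : Fin 1).castSucc : ℕ) : ℝ)) = 0 := by norm_num
    have e2 : ((((0 : Fin 1).succ : ℕ) : ℝ)) = 1 := by norm_num
    simp only [e1, e2]
    rw [intervalIntegral.integral_congr (g := fun _ => M)
      (by rw [Set.uIcc_of_le zero_le_one]; exact hsup)]
    simp

lemma aux_mem_eq {N : ℕ} {f : ℝ → ℝ} {P : Fin (N + 1) → ℝ}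
    (hP : memInteriorSimplex P) :
    Df f P P ∈ finslerLengths f P P := by
  have hDf : Df f P P = 0 := by simp [Df]
  rw [hDf]
  apply aux_onepiece (γ := fun _ => P) rfl rfl (fun τ _ => hP) contDiffOn_const
  intro τ hτ
  have : ∀ i : Fin (N+1), deriv f (P i) * derivWithin (fun _ => P i) (Set.Icc (0:ℝ) 1) τ = 0 := by
    intro i
    rw [(hasDerivWithinAt_const τ (Set.Icc (0:ℝ) 1) (P i)).derivWithin
      (uniqueDiffOn_Icc one_pos τ hτ), mul_zero]
  simp only [this]
  exact ciSup_const

lemma aux_mem_ne {N : ℕ} {f : ℝ → ℝ}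
    (hfc : ContinuousOn f (Set.Icc 0 1))
    (hfm : StrictMonoOn f (Set.Icc 0 1))
    (hf0 : f 0 = 0) (hf1 : f 1 = 1)
    (hfsmooth : ContDiffOn ℝ 1 f (Set.Ioo 0 1))
    (hf'pos : ∀ x ∈ Set.Ioo (0 : ℝ) 1, 0 < deriv f x)
    {P Q : Fin (N + 1) → ℝ}
    (hP : memInteriorSimplex P) (hQ : memInteriorSimplex Q) (hPQ : P ≠ Q) :
    Df f P Q ∈ finslerLengths f P Q := by
  classical
  obtain ⟨g, hgf, hgmem, hgderiv, hgsmooth⟩ := aux_inv hfc hfm hf0 hf1 hfsmooth hf'pos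
  have hmono : MonotoneOn f (Set.Icc 0 1) := hfm.monotoneOn
  set d : Fin (N+1) → ℝ := fun i => f (Q i) - f (P i) with hd
  set x : Fin (N+1) → ℝ → ℝ := fun i τ => g (f (P i) + τ * d i) with hxdef
  set decS : Finset (Fin (N+1)) := Finset.univ.filter (fun i => d i < 0) with hdecS
  set incS : Finset (Fin (N+1)) := Finset.univ.filter (fun i => ¬ d i < 0) with hincS
  set A : ℝ := ∑ i ∈ decS, P i with hA
  set B : ℝ := ∑ i ∈ decS, Q i with hB
  set R : ℝ → ℝ := fun τ => 1 - ∑ i ∈ incS, x i τ with hR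
  set lam : ℝ → ℝ := fun τ => (R τ - B) / (A - B) with hlamdef
  set γ : ℝ → Fin (N+1) → ℝ :=
    fun τ i => if d i < 0 then Q i + (P i - Q i) * lam τ else x i τ with hγdef
  have hPm : ∀ i, P i ∈ Set.Ioo (0:ℝ) 1 := hP.1
  have hQm : ∀ i, Q i ∈ Set.Ioo (0:ℝ) 1 := hQ.1
  have hIccP : ∀ i, P i ∈ Set.Icc (0:ℝ) 1 := fun i => Set.Ioo_subset_Icc_self (hPm i)
  have hIccQ : ∀ i, Q i ∈ Set.Icc (0:ℝ) 1 := fun i => Set.Ioo_subset_Icc_self (hQm i)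
  have hfIoo : ∀ y ∈ Set.Ioo (0:ℝ) 1, f y ∈ Set.Ioo (0:ℝ) 1 := by
    intro y hy
    constructor
    · rw [← hf0]
      exact hfm (Set.left_mem_Icc.mpr zero_le_one) (Set.Ioo_subset_Icc_self hy) hy.1
    · rw [← hf1]
      exact hfm (Set.Ioo_subset_Icc_self hy) (Set.right_mem_Icc.mpr zero_le_one) hy.2
  have hdneg : ∀ i, d i < 0 → Q i < P i := by
    intro i hi
    by_contra hcon
    push_neg at hcon
    have h2 : f (P i) ≤ f (Q i) := hmono (hIccP i) (hIccQ i) hcon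
    rw [hd] at hi
    simp only at hi
    linarith
  have hfQP : ∀ i, f (Q i) = f (P i) + d i := by
    intro i; rw [hd]; ring
  have humem : ∀ i, ¬ d i < 0 → ∀ τ ∈ Set.Icc (0:ℝ) 1,
      f (P i) + τ * d i ∈ Set.Ioo (0:ℝ) 1 := by
    intro i hi τ hτ
    push_neg at hi
    have h1 : 0 ≤ τ * d i := mul_nonneg hτ.1 hi
    have h2 : τ * d i ≤ d i := by nlinarith [hτ.2]
    have hfP := hfIoo _ (hPm i)
    have hfQ := hfIoo _ (hQm i)
    have hq := hfQP i
    exact ⟨by linarith [hfP.1], by linarith [hfQ.2]⟩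
  have hxmem : ∀ i, ¬ d i < 0 → ∀ τ ∈ Set.Icc (0:ℝ) 1,
      x i τ ∈ Set.Ioo (0:ℝ) 1 ∧ f (x i τ) = f (P i) + τ * d i :=
    fun i hi τ hτ => hgmem _ (humem i hi τ hτ)
  have hxderiv : ∀ i, ¬ d i < 0 → ∀ τ ∈ Set.Icc (0:ℝ) 1,
      HasDerivAt (x i) ((deriv f (x i τ))⁻¹ * d i) τ := by
    intro i hi τ hτ
    have hu : HasDerivAt (fun s : ℝ => f (P i) + s * d i) (d i) τ := by
      simpa using ((hasDerivAt_id τ).mul_const (d i)).const_add (f (P i))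
    have hcomp := (hgderiv _ (humem i hi τ hτ)).comp τ hu
    exact hcomp
  have hxcd : ∀ i, ¬ d i < 0 → ContDiffOn ℝ 1 (x i) (Set.Icc 0 1) := by
    intro i hi
    have hu : ContDiffOn ℝ 1 (fun s : ℝ => f (P i) + s * d i) (Set.Icc 0 1) :=
      contDiffOn_const.add (contDiffOn_id.mul contDiffOn_const)
    exact hgsmooth.comp hu (fun τ hτ => humem i hi τ hτ)
  have hx0 : ∀ i, x i 0 = P i := by
    intro i
    rw [hxdef]
    simp only [zero_mul, add_zero]
    exact hgf _ (hIccP i)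
  have hx1 : ∀ i, x i 1 = Q i := by
    intro i
    rw [hxdef]
    simp only [one_mul]
    rw [← hfQP i]
    exact hgf _ (hIccQ i)
  have hRcd : ContDiffOn ℝ 1 R (Set.Icc 0 1) := by
    rw [hR]
    exact contDiffOn_const.sub
      (ContDiffOn.sum (fun i hi => hxcd i (Finset.mem_filter.mp hi).2))
  have hRderiv : ∀ τ ∈ Set.Icc (0:ℝ) 1,
      HasDerivAt R (-(∑ i ∈ incS, (deriv f (x i τ))⁻¹ * d i)) τ := by
    intro τ hτ
    have hs : HasDerivAt (fun s => ∑ i ∈ incS, x i s)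
        (∑ i ∈ incS, (deriv f (x i τ))⁻¹ * d i) τ :=
      HasDerivAt.fun_sum (fun i hi => hxderiv i (Finset.mem_filter.mp hi).2 τ hτ)
    have := hs.const_sub 1
    simpa [hR] using this
  have hsum_nonneg : ∀ τ ∈ Set.Icc (0:ℝ) 1,
      0 ≤ ∑ i ∈ incS, (deriv f (x i τ))⁻¹ * d i := by
    intro τ hτ
    apply Finset.sum_nonneg
    intro i hi
    have hii := (Finset.mem_filter.mp hi).2
    exact mul_nonneg (inv_nonneg.mpr (hf'pos _ (hxmem i hii τ hτ).1).le) (not_lt.mp hii)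
  have hRanti : AntitoneOn R (Set.Icc 0 1) := by
    apply antitoneOn_of_deriv_nonpos (convex_Icc 0 1) hRcd.continuousOn
    · rw [interior_Icc]
      exact fun τ hτ =>
        ((hRderiv τ (Set.Ioo_subset_Icc_self hτ)).differentiableAt).differentiableWithinAt
    · intro τ hτ
      rw [interior_Icc] at hτ
      rw [(hRderiv τ (Set.Ioo_subset_Icc_self hτ)).deriv]
      exact neg_nonpos.mpr (hsum_nonneg τ (Set.Ioo_subset_Icc_self hτ))
  have hsplitP : ∑ i ∈ decS, P i + ∑ i ∈ incS, P i = 1 := by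
    rw [hdecS, hincS, Finset.sum_filter_add_sum_filter_not, hP.2]
  have hsplitQ : ∑ i ∈ decS, Q i + ∑ i ∈ incS, Q i = 1 := by
    rw [hdecS, hincS, Finset.sum_filter_add_sum_filter_not, hQ.2]
  have hR0 : R 0 = A := by
    rw [hR]
    simp only []
    rw [Finset.sum_congr rfl (fun i _ => hx0 i), hA]
    linarith
  have hR1 : R 1 = B := by
    rw [hR]
    simp only []
    rw [Finset.sum_congr rfl (fun i _ => hx1 i), hB]
    linarith
  have hexQP : ∃ i, Q i < P i := by
    by_contra hcon
    push_neg at hcon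
    apply hPQ
    funext i
    have hsum : ∑ k, P k = ∑ k, Q k := by rw [hP.2, hQ.2]
    exact (Finset.sum_eq_sum_iff_of_le (fun k _ => hcon k)).mp hsum i (Finset.mem_univ i)
  have hexPQ : ∃ i, P i < Q i := by
    by_contra hcon
    push_neg at hcon
    apply hPQ
    funext i
    have hsum : ∑ k, Q k = ∑ k, P k := by rw [hP.2, hQ.2]
    exact ((Finset.sum_eq_sum_iff_of_le (fun k _ => hcon k)).mp hsum i (Finset.mem_univ i)).symm
  have hdecne : decS.Nonempty := by
    obtain ⟨i, hi⟩ := hexQP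
    refine ⟨i, ?_⟩
    rw [hdecS, Finset.mem_filter]
    refine ⟨Finset.mem_univ i, ?_⟩
    rw [hd]
    simp only []
    have := hfm (hIccQ i) (hIccP i) hi
    linarith
  have hABpos : 0 < A - B := by
    have he : A - B = ∑ i ∈ decS, (P i - Q i) := by
      rw [hA, hB, Finset.sum_sub_distrib]
    rw [he]
    exact Finset.sum_pos
      (fun i hi => sub_pos.mpr (hdneg i (Finset.mem_filter.mp hi).2)) hdecne
  have hMpos : 0 < Df f P Q := by
    obtain ⟨i, hi⟩ := hexPQ
    have hdi : 0 < f (Q i) - f (P i) := sub_pos.mpr (hfm (hIccP i) (hIccQ i) hi)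
    have hle : f (Q i) - f (P i) ≤ Df f P Q :=
      le_ciSup (f := fun k => f (Q k) - f (P k))
        (Set.Finite.bddAbove (Set.finite_range _)) i
    linarith
  have hRrange : ∀ τ ∈ Set.Icc (0:ℝ) 1, B ≤ R τ ∧ R τ ≤ A := by
    intro τ hτ
    constructor
    · rw [← hR1]
      exact hRanti hτ (Set.right_mem_Icc.mpr zero_le_one) hτ.2
    · rw [← hR0]
      exact hRanti (Set.left_mem_Icc.mpr zero_le_one) hτ hτ.1
  have hlamrange : ∀ τ ∈ Set.Icc (0:ℝ) 1, lam τ ∈ Set.Icc (0:ℝ) 1 := by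
    intro τ hτ
    rw [hlamdef]
    constructor
    · exact div_nonneg (sub_nonneg.mpr (hRrange τ hτ).1) hABpos.le
    · rw [div_le_one hABpos]
      linarith [(hRrange τ hτ).2]
  have hγmem : ∀ τ ∈ Set.Icc (0:ℝ) 1, memInteriorSimplex (γ τ) := by
    intro τ hτ
    constructor
    · intro i
      by_cases hi : d i < 0
      · rw [hγdef]
        simp only [if_pos hi]
        have h1 := (hlamrange τ hτ).1
        have h2 := (hlamrange τ hτ).2
        have hpq := hdneg i hi
        have hq0 := (hQm i).1
        have hp1 := (hPm i).2
        constructor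
        · nlinarith
        · nlinarith
      · rw [hγdef]
        simp only [if_neg hi]
        exact (hxmem i hi τ hτ).1
    · have hsplit := Finset.sum_filter_add_sum_filter_not Finset.univ
        (fun i => d i < 0) (fun i => γ τ i)
      rw [← hdecS, ← hincS] at hsplit
      have hdecsum : ∑ i ∈ decS, γ τ i = B + (A - B) * lam τ := by
        have he : ∀ i ∈ decS, γ τ i = Q i + (P i - Q i) * lam τ := by
          intro i hi
          rw [hγdef]
          simp only [if_pos (Finset.mem_filter.mp hi).2]
        rw [Finset.sum_congr rfl he, Finset.sum_add_distrib, ← Finset.sum_mul,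
          Finset.sum_sub_distrib, ← hA, ← hB]
      have hincsum : ∑ i ∈ incS, γ τ i = 1 - R τ := by
        have he : ∀ i ∈ incS, γ τ i = x i τ := by
          intro i hi
          rw [hγdef]
          simp only [if_neg (Finset.mem_filter.mp hi).2]
        rw [Finset.sum_congr rfl he, hR]
        ring
      have hcancel : (A - B) * lam τ = R τ - B := by
        rw [hlamdef]
        field_simp
      rw [← hsplit, hdecsum, hincsum, hcancel]
      ring
  have hγcd : ContDiffOn ℝ 1 γ (Set.Icc 0 1) := by
    apply contDiffOn_pi.mpr
    intro i
    by_cases hi : d i < 0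
    · have he : (fun τ => γ τ i) = fun τ => Q i + (P i - Q i) * lam τ := by
        funext τ; rw [hγdef]; simp only [if_pos hi]
      rw [he]
      apply contDiffOn_const.add
      apply contDiffOn_const.mul
      have helam : lam = fun τ => (R τ - B) / (A - B) := hlamdef
      rw [helam]
      exact (hRcd.sub contDiffOn_const).div_const _
    · have he : (fun τ => γ τ i) = x i := by
        funext τ; rw [hγdef]; simp only [if_neg hi]
      rw [he]
      exact hxcd i hi
  have hγ0 : γ 0 = P := by
    funext i
    by_cases hi : d i < 0
    · rw [hγdef]
      simp only [if_pos hi]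
      have : lam 0 = 1 := by
        rw [hlamdef]
        simp only [hR0]
        field_simp
      rw [this]
      ring
    · rw [hγdef]
      simp only [if_neg hi]
      exact hx0 i
  have hγ1 : γ 1 = Q := by
    funext i
    by_cases hi : d i < 0
    · rw [hγdef]
      simp only [if_pos hi]
      have : lam 1 = 0 := by
        rw [hlamdef]
        simp only [hR1]
        simp
      rw [this]
      ring
    · rw [hγdef]
      simp only [if_neg hi]
      exact hx1 i
  have hsupfinal : ∀ τ ∈ Set.Icc (0:ℝ) 1,
      (⨆ i, deriv f (γ τ i) * derivWithin (fun s => γ s i) (Set.Icc 0 1) τ)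
        = Df f P Q := by
    intro τ hτ
    have hUD := (uniqueDiffOn_Icc (one_pos (α := ℝ))) τ hτ
    have hterm_inc : ∀ i, ¬ d i < 0 →
        deriv f (γ τ i) * derivWithin (fun s => γ s i) (Set.Icc 0 1) τ = d i := by
      intro i hi
      have hfun : (fun s => γ s i) = x i := by
        funext s; rw [hγdef]; simp only [if_neg hi]
      have hdw : derivWithin (x i) (Set.Icc 0 1) τ = (deriv f (x i τ))⁻¹ * d i :=
        ((hxderiv i hi τ hτ).hasDerivWithinAt).derivWithin hUD
      have hγτ : γ τ i = x i τ := by rw [hγdef]; simp only [if_neg hi]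
      rw [hfun, hdw, hγτ, ← mul_assoc,
        mul_inv_cancel₀ (hf'pos _ (hxmem i hi τ hτ).1).ne', one_mul]
    have hterm_dec : ∀ i, d i < 0 →
        deriv f (γ τ i) * derivWithin (fun s => γ s i) (Set.Icc 0 1) τ ≤ 0 := by
      intro i hi
      have hfun : (fun s => γ s i) = fun s => Q i + (P i - Q i) * lam s := by
        funext s; rw [hγdef]; simp only [if_pos hi]
      have hlder : HasDerivAt lam
          ((-(∑ k ∈ incS, (deriv f (x k τ))⁻¹ * d k)) / (A - B)) τ := by
        have := ((hRderiv τ hτ).sub_const B).div_const (A - B)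
        rw [hlamdef]
        exact this
      have hder : HasDerivAt (fun s => Q i + (P i - Q i) * lam s)
          ((P i - Q i) * ((-(∑ k ∈ incS, (deriv f (x k τ))⁻¹ * d k)) / (A - B))) τ :=
        (hlder.const_mul (P i - Q i)).const_add (Q i)
      have hdw : derivWithin (fun s => Q i + (P i - Q i) * lam s) (Set.Icc 0 1) τ
          = (P i - Q i) * ((-(∑ k ∈ incS, (deriv f (x k τ))⁻¹ * d k)) / (A - B)) :=
        hder.hasDerivWithinAt.derivWithin hUD
      rw [hfun, hdw]
      apply mul_nonpos_of_nonneg_of_nonpos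
      · exact (hf'pos _ ((hγmem τ hτ).1 i)).le
      · apply mul_nonpos_of_nonneg_of_nonpos
        · linarith [hdneg i hi]
        · exact div_nonpos_of_nonpos_of_nonneg
            (neg_nonpos.mpr (hsum_nonneg τ hτ)) hABpos.le
    apply le_antisymm
    · apply ciSup_le
      intro i
      by_cases hi : d i < 0
      · exact (hterm_dec i hi).trans hMpos.le
      · rw [hterm_inc i hi]
        exact le_ciSup (f := fun k => f (Q k) - f (P k))
          (Set.Finite.bddAbove (Set.finite_range _)) i
    · obtain ⟨i0, hi0⟩ := exists_eq_ciSup_of_finite (f := fun k => f (Q k) - f (P k))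
      have hdi0 : d i0 = Df f P Q := hi0
      have hnn : ¬ d i0 < 0 := by rw [hdi0]; exact not_lt.mpr hMpos.le
      calc Df f P Q = deriv f (γ τ i0) *
            derivWithin (fun s => γ s i0) (Set.Icc 0 1) τ := by
            rw [hterm_inc i0 hnn, hdi0]
        _ ≤ _ := le_ciSup (f := fun k => deriv f (γ τ k) *
              derivWithin (fun s => γ s k) (Set.Icc 0 1) τ)
            (Set.Finite.bddAbove (Set.finite_range _)) i0
  exact aux_onepiece hγ0 hγ1 hγmem hγcd hsupfinal

/-- if f is C¹ on (0,1) with f' > 0 there, then D_f coincides on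
Δ°_N with the Finsler quasidistance: D_f(P,Q) is the infimum of the Finsler
lengths of piecewise C¹ curves in Δ°_N joining P to Q. -/
theorem stmt_17 {N : ℕ} (f : ℝ → ℝ)
    (hfc : ContinuousOn f (Set.Icc 0 1))
    (hfm : StrictMonoOn f (Set.Icc 0 1))
    (hf0 : f 0 = 0) (hf1 : f 1 = 1)
    (hfsmooth : ContDiffOn ℝ 1 f (Set.Ioo 0 1))
    (hf'pos : ∀ x ∈ Set.Ioo (0 : ℝ) 1, 0 < deriv f x)
    (P Q : Fin (N + 1) → ℝ)
    (hP : memInteriorSimplex P) (hQ : memInteriorSimplex Q) :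
    Df f P Q = sInf (finslerLengths f P Q) := by
  have hmem : Df f P Q ∈ finslerLengths f P Q := by
    by_cases hPQ : P = Q
    · subst hPQ
      exact aux_mem_eq hP
    · exact aux_mem_ne hfc hfm hf0 hf1 hfsmooth hf'pos hP hQ hPQ
  have hlb := aux_lb hfc hfsmooth P Q
  apply le_antisymm
  · exact le_csInf ⟨_, hmem⟩ hlb
  · exact csInf_le ⟨Df f P Q, fun L hL => hlb L hL⟩ hmem
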